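/- Let A be an m×k real matrix with nonnegative entries, let λ ≥ 0, and let sᵗ ∈ ℝᵏ have strictly positive entries. Define the diagonal k×k matrix K(sᵗ) by K(sᵗ)_{ab} = δ_{ab} · ((AᵀA sᵗ)_a + λ) / sᵗ_a. Then the matrix K(sᵗ) − AᵀA is positive semidefinite: for every v ∈ ℝᵏ, vᵀ(K(sᵗ) − AᵀA)v ≥ 0. -/
import Mathlib


open Matrix BigOperators

/-- For `A` with nonnegative entries, `λ ≥ 0` and `sᵗ` with strictly
positive entries, the matrix `K(sᵗ) − AᵀA` is positive semidefinite, where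
`K(sᵗ)` is the diagonal matrix with entries `((AᵀA sᵗ)_a + λ) / sᵗ_a`. -/
theorem nnsc_K_minus_AtA_posSemidef
    {m k : ℕ}
    (A : Matrix (Fin m) (Fin k) ℝ) (hA : ∀ i j, 0 ≤ A i j)
    (lam : ℝ) (hlam : 0 ≤ lam)
    (sT : Fin k → ℝ) (hsT : ∀ a, 0 < sT a)
    (K : Matrix (Fin k) (Fin k) ℝ)
    (hK : K = Matrix.diagonal (fun a => ((Aᵀ * A).mulVec sT a + lam) / sT a)) :
    ∀ v : Fin k → ℝ, 0 ≤ v ⬝ᵥ (K - Aᵀ * A).mulVec v := by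
  intro v
  subst hK
  set B := Aᵀ * A with hB
  have hBsymm : ∀ a b, B a b = B b a := by
    intro a b
    simp [hB, Matrix.mul_apply, mul_comm]
  have hBnn : ∀ a b, 0 ≤ B a b := by
    intro a b
    simp only [hB, Matrix.mul_apply, Matrix.transpose_apply]
    exact Finset.sum_nonneg fun i _ => mul_nonneg (hA i a) (hA i b)
  set f : Fin k → Fin k → ℝ :=
    fun a b => B a b * (sT b * v a ^ 2 / sT a - v a * v b) with hf
  have expand : v ⬝ᵥ (Matrix.diagonal (fun a => (B.mulVec sT a + lam) / sT a)
        - B).mulVec v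
      = (∑ a, ∑ b, f a b) + lam * ∑ a, v a ^ 2 / sT a := by
    simp only [dotProduct, Matrix.mulVec, hf, Finset.mul_sum]
    rw [← Finset.sum_add_distrib]
    refine Finset.sum_congr rfl fun a _ => ?_
    have hs := (hsT a).ne'
    have hdiag : ∑ b, v a * ((Matrix.diagonal
          (fun c => (∑ x, B c x * sT x + lam) / sT c) - B) a b * v b)
        = v a * ((∑ x, B a x * sT x + lam) / sT a * v a)
          - ∑ b, v a * (B a b * v b) := by
      simp [Matrix.sub_apply, Matrix.diagonal_apply, sub_mul, mul_sub,
        Finset.sum_sub_distrib, ite_mul, mul_ite, Finset.sum_ite_eq,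
        Finset.sum_ite_eq']
    rw [hdiag]
    have h1 : ∑ b, B a b * (sT b * v a ^ 2 / sT a - v a * v b)
        = (∑ b, B a b * sT b) * v a ^ 2 / sT a - v a * ∑ b, B a b * v b := by
      simp only [mul_sub]
      rw [Finset.sum_sub_distrib]
      congr 1
      · rw [Finset.sum_mul, Finset.sum_div]
        refine Finset.sum_congr rfl fun b _ => ?_
        ring
      · rw [Finset.mul_sum]
        refine Finset.sum_congr rfl fun b _ => ?_
        ring
    rw [h1]
    have h2 : ∑ b, v a * (B a b * v b) = v a * ∑ b, B a b * v b := by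
      rw [Finset.mul_sum]
    rw [h2]
    field_simp
    ring
  rw [expand]
  have h2 : (0:ℝ) ≤ ∑ a, ∑ b, (f a b + f b a) := by
    refine Finset.sum_nonneg fun a _ => Finset.sum_nonneg fun b _ => ?_
    have sa := hsT a
    have sb := hsT b
    have hid : f a b + f b a
        = B a b * ((sT b * v a - sT a * v b) ^ 2 / (sT a * sT b)) := by
      simp only [hf, hBsymm b a]
      field_simp
      ring
    rw [hid]
    exact mul_nonneg (hBnn a b)
      (div_nonneg (sq_nonneg _) (le_of_lt (mul_pos sa sb)))
  have h3 : ∑ a, ∑ b, (f a b + f b a) = 2 * ∑ a, ∑ b, f a b := by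
    simp only [Finset.sum_add_distrib]
    rw [Finset.sum_comm (f := fun a b => f b a)]
    ring
  have h4 : (0:ℝ) ≤ ∑ a, ∑ b, f a b := by nlinarith [h2, h3]
  have h5 : (0:ℝ) ≤ lam * ∑ a, v a ^ 2 / sT a :=
    mul_nonneg hlam (Finset.sum_nonneg fun a _ =>
      div_nonneg (sq_nonneg _) (hsT a).le)
  linarith
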